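/- Let g : ℝ → ℝ be any map such that g(x) = x whenever x < −10 or x > 1, and g(x) = h(T₋₁⁻¹(h⁻¹(x))) for all x ∈ [−10, −9.8], where T₋₁⁻¹(x) = 100x + 99 is the inverse of T₋₁ and h⁻¹ is the inverse of h (h⁻¹(y) = 10y for y ≥ 0 and h⁻¹(y) = y/10 for y < 0). Then K₋ is contained in the image of K₋ under g: K₋ ⊆ g '' K₋. -/
import Mathlib


noncomputable section

/-- The affine contraction of ratio 1/100 fixing 0. -/
def T0 (x : ℝ) : ℝ := x / 100

/-- The affine contraction of ratio 1/100 fixing 1. -/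
def T1 (x : ℝ) : ℝ := 1 + (x - 1) / 100

/-- The affine contraction of ratio 1/100 fixing -1. -/
def Tm1 (x : ℝ) : ℝ := -1 + (x + 1) / 100

/-- The inverse of `T0`. -/
def T0inv (x : ℝ) : ℝ := 100 * x

/-- The `i`-th iterate of `T0` for `i ≥ 0`, and the `|i|`-th iterate of
`T0⁻¹ : x ↦ 100 x` for `i < 0`. -/
def T0z : ℤ → ℝ → ℝ
  | Int.ofNat n => T0^[n]
  | Int.negSucc n => T0inv^[n + 1]

/-- The set `K₊ = {0} ∪ ⋃ i ∈ ℤ, T₀^[i] '' (C₁ ∪ C₋₁)` where `C₁ = T₁ '' C`,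
`C₋₁ = T₋₁ '' C`. -/
def Kplus (C : Set ℝ) : Set ℝ := {0} ∪ ⋃ i : ℤ, T0z i '' (T1 '' C ∪ Tm1 '' C)

/-- The map `Q : x ↦ x/10`. -/
def Q (x : ℝ) : ℝ := x / 10

/-- The set `K₋ = Q '' K₊`. -/
def Kminus (C : Set ℝ) : Set ℝ := Q '' Kplus C

/-- The bijection `h` : `x ↦ x/10` for `x ≥ 0`, `x ↦ 10 x` for `x < 0`. -/
def hmap (x : ℝ) : ℝ := if 0 ≤ x then x / 10 else 10 * x

/-- The inverse of `h` : `y ↦ 10 y` for `y ≥ 0`, `y ↦ y/10` for `y < 0`. -/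
def hmapInv (y : ℝ) : ℝ := if 0 ≤ y then 10 * y else y / 10

/-- The inverse of `T₋₁` : `x ↦ 100 x + 99`. -/
def Tm1inv (x : ℝ) : ℝ := 100 * x + 99


lemma T0_iter (n : ℕ) (x : ℝ) : T0^[n] x = x / 100 ^ n := by
  induction n with
  | zero => simp
  | succ n ih =>
    rw [Function.iterate_succ_apply', ih, T0, pow_succ]
    ring

lemma T0inv_iter (n : ℕ) (x : ℝ) : T0inv^[n] x = 100 ^ n * x := by
  induction n with
  | zero => simp
  | succ n ih =>
    rw [Function.iterate_succ_apply', ih, T0inv, pow_succ]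
    ring

lemma C_abs_le (C : Set ℝ) (hne : C.Nonempty) (hcomp : IsCompact C)
    (hself : C = Tm1 '' C ∪ T0 '' C ∪ T1 '' C) : ∀ x ∈ C, |x| ≤ 1 := by
  obtain ⟨c₀, hc₀C, hmax⟩ := hcomp.exists_isMaxOn hne (continuous_abs.continuousOn)
  have key : |c₀| ≤ 1 := by
    have hc₀ : c₀ ∈ Tm1 '' C ∪ T0 '' C ∪ T1 '' C := hself ▸ hc₀C
    rcases hc₀ with (⟨c, hc, rfl⟩ | ⟨c, hc, rfl⟩) | ⟨c, hc, rfl⟩ <;>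
    · obtain ⟨hb1, hb2⟩ := abs_le.mp (show |c| ≤ _ from hmax hc)
      rcases abs_cases (Tm1 c) with ⟨heq, _⟩ | ⟨heq, _⟩ <;>
      rcases abs_cases (T0 c) with ⟨heq0, _⟩ | ⟨heq0, _⟩ <;>
      rcases abs_cases (T1 c) with ⟨heq1, _⟩ | ⟨heq1, _⟩ <;>
      simp only [Tm1, T0, T1] at * <;>
      linarith [abs_nonneg (Tm1 c), abs_nonneg (T0 c), abs_nonneg (T1 c)]
  intro x hx
  exact (hmax hx).trans key

lemma iterC (C : Set ℝ) (hself : C = Tm1 '' C ∪ T0 '' C ∪ T1 '' C) (n : ℕ) :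
    ∀ x ∈ C, T0^[n] x ∈ C := by
  have h0 : T0 '' C ⊆ C := fun x hx => hself ▸ Or.inl (Or.inr hx)
  induction n with
  | zero => intro x hx; simpa using hx
  | succ n ih =>
    intro x hx
    rw [Function.iterate_succ_apply']
    exact h0 ⟨_, ih x hx, rfl⟩

lemma zeroC (C : Set ℝ) (hne : C.Nonempty) (hcomp : IsCompact C)
    (hself : C = Tm1 '' C ∪ T0 '' C ∪ T1 '' C) : (0 : ℝ) ∈ C := by
  obtain ⟨c, hc⟩ := hne
  have hmem : ∀ n : ℕ, c / 100 ^ n ∈ C := by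
    intro n
    have := iterC C hself n c hc
    rwa [T0_iter] at this
  have htend : Filter.Tendsto (fun n : ℕ => c / 100 ^ n) Filter.atTop (nhds 0) := by
    have h1 : Filter.Tendsto (fun n : ℕ => ((1:ℝ)/100) ^ n) Filter.atTop (nhds 0) :=
      tendsto_pow_atTop_nhds_zero_of_lt_one (by norm_num) (by norm_num)
    have := h1.const_mul c
    simpa [div_eq_mul_inv, mul_pow] using this
  exact hcomp.isClosed.mem_of_tendsto htend (Filter.Eventually.of_forall hmem)

lemma key_mem (C : Set ℝ) (c : ℝ) (hc : c ∈ C) : 10 * Tm1 c ∈ Kminus C := by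
  refine ⟨100 * Tm1 c, Or.inr (Set.mem_iUnion.mpr ⟨-1, ⟨Tm1 c, Or.inr ⟨c, hc, rfl⟩, ?_⟩⟩), by
    simp only [Q]; ring⟩
  show T0z (Int.negSucc 0) (Tm1 c) = 100 * Tm1 c
  simp [T0z, T0inv]


theorem stmt_13 (C : Set ℝ) (hne : C.Nonempty) (hcomp : IsCompact C)
    (hself : C = Tm1 '' C ∪ T0 '' C ∪ T1 '' C)
    (g : ℝ → ℝ)
    (hg_id : ∀ x : ℝ, x < -10 ∨ 1 < x → g x = x)
    (hg_left : ∀ x ∈ Set.Icc (-10 : ℝ) (-9.8 : ℝ), g x = hmap (Tm1inv (hmapInv x))) :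
    Kminus C ⊆ g '' Kminus C := by
  have habs := C_abs_le C hne hcomp hself
  have hTm1 : Tm1 '' C ⊆ C := fun x hx => hself ▸ Or.inl (Or.inl hx)
  have hT0 : T0 '' C ⊆ C := fun x hx => hself ▸ Or.inl (Or.inr hx)
  have hT1 : T1 '' C ⊆ C := fun x hx => hself ▸ Or.inr hx
  rintro y ⟨k, hk, rfl⟩
  suffices hcl : (Q k < -10 ∨ 1 < Q k) ∨ ∃ c ∈ C, hmap c = Q k by
    rcases hcl with h | ⟨c, hc, hcy⟩
    · exact ⟨Q k, ⟨k, hk, rfl⟩, hg_id _ h⟩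
    · refine ⟨10 * Tm1 c, key_mem C c hc, ?_⟩
      obtain ⟨hb1, hb2⟩ := abs_le.mp (habs c hc)
      have hz : (10 * Tm1 c) ∈ Set.Icc (-10 : ℝ) (-9.8 : ℝ) := by
        constructor <;> · simp only [Tm1]; norm_num; linarith
      rw [hg_left _ hz, ← hcy]
      have hneg : ¬ (0 : ℝ) ≤ 10 * Tm1 c := by
        simp only [Tm1]; norm_num; linarith
      rw [hmapInv, if_neg hneg]
      congr 1
      simp only [Tm1inv, Tm1]
      ring
  rcases hk with h0 | hk
  · right
    refine ⟨0, zeroC C hne hcomp hself, ?_⟩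
    simp only [Set.mem_singleton_iff] at h0
    simp [hmap, Q, h0]
  obtain ⟨i, w, hw, rfl⟩ := Set.mem_iUnion.mp hk
  rcases i with n | n
  · have hkdef : T0z (Int.ofNat n) w = T0^[n] w := rfl
    rcases hw with ⟨c, hc, rfl⟩ | ⟨c, hc, rfl⟩
    · right
      have hmemC : T0^[n] (T1 c) ∈ C := iterC C hself n _ (hT1 ⟨c, hc, rfl⟩)
      obtain ⟨hb1, hb2⟩ := abs_le.mp (habs c hc)
      have hpos : (0 : ℝ) ≤ T0^[n] (T1 c) := by
        rw [T0_iter]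
        have h100 : (0:ℝ) < 100 ^ n := by positivity
        have hT1pos : (0:ℝ) ≤ T1 c := by simp only [T1]; linarith
        positivity
      exact ⟨T0^[n] (T1 c), hmemC, by rw [hkdef, hmap, if_pos hpos]; rfl⟩
    · right
      have hmemC : T0^[n+1] (Tm1 c) ∈ C := iterC C hself (n+1) _ (hTm1 ⟨c, hc, rfl⟩)
      obtain ⟨hb1, hb2⟩ := abs_le.mp (habs c hc)
      have hneg : ¬ (0 : ℝ) ≤ T0^[n+1] (Tm1 c) := by
        rw [T0_iter]
        have h100 : (0:ℝ) < 100 ^ (n+1) := by positivity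
        have hTneg : Tm1 c < 0 := by simp only [Tm1]; linarith
        push_neg
        exact div_neg_of_neg_of_pos hTneg h100
      refine ⟨T0^[n+1] (Tm1 c), hmemC, ?_⟩
      rw [hmap, if_neg hneg, hkdef, Q, T0_iter, T0_iter, pow_succ]
      ring
  · have hkdef : T0z (Int.negSucc n) w = T0inv^[n+1] w := rfl
    rcases hw with ⟨c, hc, rfl⟩ | ⟨c, hc, rfl⟩
    · left; right
      obtain ⟨hb1, hb2⟩ := abs_le.mp (habs c hc)
      rw [hkdef, Q, T0inv_iter]
      have h100 : (100:ℝ) ^ n ≥ 1 := one_le_pow₀ (by norm_num)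
      have hT1b : T1 c ≥ 98/100 := by simp only [T1]; linarith
      rw [pow_succ]
      nlinarith
    · obtain ⟨hb1, hb2⟩ := abs_le.mp (habs c hc)
      have hTneg : Tm1 c ≤ -98/100 := by simp only [Tm1]; linarith
      rcases n with _ | m
      · right
        refine ⟨Tm1 c, hTm1 ⟨c, hc, rfl⟩, ?_⟩
        rw [hmap, if_neg (by linarith), hkdef, Q, T0inv_iter]
        ring
      · left; left
        rw [hkdef, Q, T0inv_iter]
        have h100 : (100:ℝ) ^ m ≥ 1 := one_le_pow₀ (by norm_num)
        rw [pow_succ, pow_succ]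
        nlinarith
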